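/- For every n ≥ 2, Q_n(x) = ∑_{j=0}^{⌊n/2⌋} ( C(n−j, j) + C(n−j−1, j−1) ) · (1+x)^j as polynomials in ℤ[x], where C(a,b) is the binomial coefficient with the convention that C(a,b) = 0 when b < 0. -/
import Mathlib

open Polynomial

/-- The cube polynomials `Q n` of the matchable Lucas cubes. -/
noncomputable def Q : ℕ → Polynomial ℤ
  | 0 => 1
  | 1 => 2 + X
  | 2 => 3 + 2 * X
  | 3 => 4 + 3 * X
  | (n + 4) => Q (n + 3) + (1 + X) * Q (n + 2)

/-- The entry `Y a b = C(a,b) + C(a-1,b-1)` of the Lucas triangle, where the second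
binomial coefficient is `0` when `b - 1 < 0`, i.e. when `b = 0`. -/
def Y (a b : ℕ) : ℤ :=
  (a.choose b : ℤ) + (if b = 0 then 0 else ((a - 1).choose (b - 1) : ℤ))

noncomputable def S (n : ℕ) : Polynomial ℤ :=
  ∑ j ∈ Finset.range (n / 2 + 1), Polynomial.C (Y (n - j) j) * (1 + X) ^ j

lemma Y_zero (a : ℕ) : Y a 0 = 1 := by simp [Y]

lemma Y_top (k : ℕ) : Y (k+1) (k+2) = 0 := by
  simp [Y, Nat.choose_eq_zero_of_lt (show k+1 < k+2 by omega),
    Nat.choose_eq_zero_of_lt (show k < k+1 by omega)]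

lemma Y_pascal (a b : ℕ) (ha : 1 ≤ a) : Y (a+1) (b+1) = Y a (b+1) + Y a b := by
  obtain ⟨c, rfl⟩ : ∃ c, a = c + 1 := ⟨a - 1, by omega⟩
  cases b with
  | zero => simp [Y, Nat.choose_one_right]
  | succ b =>
    simp only [Y, if_neg (Nat.succ_ne_zero _), Nat.add_sub_cancel, Nat.succ_sub_one]
    rw [Nat.choose_succ_succ' (c+1) (b+1), Nat.choose_succ_succ' c b]
    push_cast
    ring

lemma Q_rec (n : ℕ) : Q (n+4) = Q (n+3) + (1+X) * Q (n+2) := rfl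

lemma S_rec (n : ℕ) : S (n+4) = S (n+3) + (1+X) * S (n+2) := by
  have hM : (n+4)/2 = n/2 + 2 := by omega
  have h2 : (n+2)/2 = n/2 + 1 := by omega
  have key : ∀ j ∈ Finset.range (n/2+2),
      Polynomial.C (Y (n+4-(j+1)) (j+1)) * (1+X)^(j+1)
      = Polynomial.C (Y (n+3-(j+1)) (j+1)) * (1+X)^(j+1)
        + (1+X) * (Polynomial.C (Y (n+2-j) j) * (1+X)^j) := by
    intro j hj
    simp only [Finset.mem_range] at hj
    have e1 : n+4-(j+1) = (n+2-j)+1 := by omega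
    have e2 : n+3-(j+1) = n+2-j := by omega
    obtain ⟨a, ha⟩ : ∃ a, n+2-j = a+1 := ⟨n+1-j, by omega⟩
    rw [e1, e2, ha, Y_pascal (a+1) j (by omega), map_add]
    ring
  have top : ∑ j ∈ Finset.range (n/2+2+1),
      Polynomial.C (Y (n+3-j) j) * (1+X)^j = S (n+3) := by
    rcases Nat.even_or_odd n with ⟨m, rfl⟩ | ⟨m, rfl⟩
    · have h4 : (m+m+3)/2 = (m+m)/2 + 1 := by omega
      rw [Finset.sum_range_succ,
        show m+m+3-((m+m)/2+2) = (m+m)/2+1 by omega, Y_top, S, h4]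
      simp
    · have h4 : (2*m+1+3)/2 = (2*m+1)/2 + 2 := by omega
      rw [S, h4]
  calc S (n+4)
      = ∑ j ∈ Finset.range (n/2+2),
          Polynomial.C (Y (n+4-(j+1)) (j+1)) * (1+X)^(j+1)
        + Polynomial.C (Y (n+4-0) 0) * (1+X)^0 := by
        rw [S, hM, Finset.sum_range_succ']
    _ = (∑ j ∈ Finset.range (n/2+2),
          Polynomial.C (Y (n+3-(j+1)) (j+1)) * (1+X)^(j+1)
        + Polynomial.C (Y (n+3-0) 0) * (1+X)^0)
        + (1+X) * ∑ j ∈ Finset.range (n/2+2),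
            Polynomial.C (Y (n+2-j) j) * (1+X)^j := by
        rw [Finset.sum_congr rfl key, Finset.sum_add_distrib, ← Finset.mul_sum]
        simp only [Y_zero, map_one, pow_zero, mul_one]
        ring
    _ = ∑ j ∈ Finset.range (n/2+2+1),
          Polynomial.C (Y (n+3-j) j) * (1+X)^j + (1+X) * S (n+2) := by
        rw [← Finset.sum_range_succ'
          (fun j => Polynomial.C (Y (n+3-j) j) * (1+X)^j) (n/2+2), S, h2]
    _ = S (n+3) + (1+X) * S (n+2) := by rw [top]

lemma Q_eq_S : ∀ k, Q (k+2) = S (k+2) ∧ Q (k+3) = S (k+3) := by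
  intro k
  induction k with
  | zero =>
    constructor
    · show Q 2 = S 2
      rw [show Q 2 = 3 + 2*X from rfl]
      simp [S, Finset.sum_range_succ, Y]
      ring
    · show Q 3 = S 3
      rw [show Q 3 = 4 + 3*X from rfl]
      simp [S, Finset.sum_range_succ, Y]
      ring
  | succ k ih =>
    refine ⟨ih.2, ?_⟩
    rw [show k+1+3 = k+4 from rfl, Q_rec, S_rec, ih.1, ih.2]

theorem Q_eq_sum_Lucas_triangle (n : ℕ) (hn : 2 ≤ n) :
    Q n = ∑ j ∈ Finset.range (n / 2 + 1), Polynomial.C (Y (n - j) j) * (1 + X) ^ j := by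
  obtain ⟨k, rfl⟩ : ∃ k, n = k + 2 := ⟨n - 2, by omega⟩
  exact (Q_eq_S k).1
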